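/- Let C be a d×d real positive definite matrix. Suppose x₁ is a unit-norm eigenvector of C with Cx₁ = βx₁, and x₂ ∈ ℝ^d satisfies Cx₂ = (x₁ᵀCx₂)x₁ + (x₂ᵀCx₂)x₂. Then either x₂ = 0, or x₂ is a unit-norm eigenvector of C with x₁ᵀx₂ = 0. -/

import Mathlib

open Matrix

theorem sanger_second_column (d : ℕ) (C : Matrix (Fin d) (Fin d) ℝ)
    (hC : C.PosDef) (x₁ x₂ : Fin d → ℝ) (β : ℝ)
    (hx₁norm : x₁ ⬝ᵥ x₁ = 1) (hx₁eig : C.mulVec x₁ = β • x₁)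
    (hfix : C.mulVec x₂ = (x₁ ⬝ᵥ C.mulVec x₂) • x₁ + (x₂ ⬝ᵥ C.mulVec x₂) • x₂) :
    x₂ = 0 ∨ (x₂ ⬝ᵥ x₂ = 1 ∧ (∃ l : ℝ, C.mulVec x₂ = l • x₂) ∧ x₁ ⬝ᵥ x₂ = 0) := by
  by_cases hz : x₂ = 0
  · exact Or.inl hz
  right
  have hμpos : 0 < x₂ ⬝ᵥ C.mulVec x₂ := by
    have := hC.dotProduct_mulVec_pos hz
    simpa using this
  have hs : (x₂ ⬝ᵥ C.mulVec x₂) * (x₁ ⬝ᵥ x₂) = 0 := by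
    have h := congrArg (fun v => x₁ ⬝ᵥ v) hfix
    simp only [dotProduct_add, dotProduct_smul, smul_eq_mul, hx₁norm, mul_one] at h
    linarith
  have hs0 : x₁ ⬝ᵥ x₂ = 0 := by
    rcases mul_eq_zero.mp hs with h | h
    · exact absurd h hμpos.ne'
    · exact h
  have ha0 : x₁ ⬝ᵥ C.mulVec x₂ = 0 := by
    have hsym : x₁ ⬝ᵥ C.mulVec x₂ = C.mulVec x₁ ⬝ᵥ x₂ := by
      rw [dotProduct_mulVec, ← mulVec_transpose]
      congr 1
      rw [show Cᵀ = C from hC.1]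
    rw [hsym, hx₁eig, smul_dotProduct, smul_eq_mul, hs0, mul_zero]
  have heig : C.mulVec x₂ = (x₂ ⬝ᵥ C.mulVec x₂) • x₂ := by
    conv_lhs => rw [hfix]
    rw [ha0, zero_smul, zero_add]
  have hnorm : x₂ ⬝ᵥ x₂ = 1 := by
    have h := congrArg (fun v => x₂ ⬝ᵥ v) heig
    simp only [dotProduct_smul, smul_eq_mul] at h
    have h2 : (x₂ ⬝ᵥ C.mulVec x₂) * (x₂ ⬝ᵥ x₂) = (x₂ ⬝ᵥ C.mulVec x₂) * 1 := by
      rw [mul_one]; linarith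
    exact mul_left_cancel₀ hμpos.ne' h2
  exact ⟨hnorm, ⟨_, heig⟩, hs0⟩
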